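/- For every percolation configuration, τ = inf{m ≥ 0 : ℓ̲_m > ū_m}. -/

import Mathlib

open MeasureTheory ProbabilityTheory Filter Topology Set
open scoped ENNReal

abbrev Config := (ℤ × ℤ) → Bool

/-- Membership in the rotated lattice L. -/
def lat (z : ℤ × ℤ) : Prop := 0 ≤ z.1 ∧ Even (z.1 + z.2)

/-- Allowed steps of the rotated oriented percolation model. -/
def rotStep (d : ℤ × ℤ) : Prop := d = (1, 1) ∨ d = (2, 0) ∨ d = (1, -1)

/-- `conn ω x y` : there is a directed path from `x` to `y` in `L`, all of whose
points except possibly the last are open. -/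
def conn (ω : Config) (x y : ℤ × ℤ) : Prop :=
  ∃ (k : ℕ) (c : ℕ → ℤ × ℤ), c 0 = x ∧ c k = y ∧ (∀ i ≤ k, lat (c i)) ∧
    (∀ i < k, rotStep (c (i + 1) - c i)) ∧ (∀ i < k, ω (c i) = true)

def cluster (ω : Config) (x : ℤ × ℤ) : Set (ℤ × ℤ) := {y | conn ω x y}

def OmegaInf : Set Config := {ω | (cluster ω (0, 0)).Infinite}

noncomputable def supZ (S : Set ℤ) : EReal := sSup ((fun x : ℤ => ((x : ℝ) : EReal)) '' S)
noncomputable def infZ (S : Set ℤ) : EReal := sInf ((fun x : ℤ => ((x : ℝ) : EReal)) '' S)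

def xi (ω : Config) (n : ℕ) : Set ℤ := {x | conn ω (0, 0) ((n : ℤ), x)}
noncomputable def uSeq (ω : Config) (n : ℕ) : EReal := supZ (xi ω n)
noncomputable def lSeq (ω : Config) (n : ℕ) : EReal := infZ (xi ω n)

def xibar (ω : Config) (n : ℕ) : Set ℤ :=
  {x | ∃ y : ℤ, y ≤ 0 ∧ (conn ω (0, y) ((n : ℤ), x) ∨ conn ω (1, y) ((n : ℤ), x))}
noncomputable def ubar (ω : Config) (n : ℕ) : EReal :=
  if n = 0 then 0 else supZ (xibar ω n)

def xiunder (ω : Config) (n : ℕ) : Set ℤ :=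
  {x | ∃ y : ℤ, 0 ≤ y ∧ (conn ω (0, y) ((n : ℤ), x) ∨ conn ω (1, y) ((n : ℤ), x))}
noncomputable def lunder (ω : Config) (n : ℕ) : EReal :=
  if n = 0 then 0 else infZ (xiunder ω n)

noncomputable def ubarSeg (ω : Config) (m n : ℕ) : EReal :=
  sSup {e : EReal | ∃ x y : ℤ, ((y : ℝ) : EReal) ≤ ubar ω m ∧
    (conn ω ((m : ℤ), y) ((n : ℤ), x) ∨ conn ω ((m : ℤ) + 1, y) ((n : ℤ), x)) ∧
    e = ((x : ℝ) : EReal) - ubar ω m}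

/-- `P` is the Bernoulli(`p`) product measure on site configurations. -/
def IsBernoulli (p : ℝ) (P : Measure Config) : Prop :=
  IsProbabilityMeasure P ∧
  ∀ (s : Finset (ℤ × ℤ)) (f : (ℤ × ℤ) → Bool),
    P {ω : Config | ∀ z ∈ s, ω z = f z} =
      ∏ z ∈ s, ENNReal.ofReal (if f z then p else 1 - p)

/-- the nonnegative part of an extended real, as an element of `ℝ≥0∞`. -/
noncomputable def nnpart (x : EReal) : ℝ≥0∞ := (max x 0).abs

/-- `E_p[ū_n]`, as an extended real (`ū_n ≤ n`, so this is `n - E[n - ū_n]`). -/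
noncomputable def Eubar (P : Measure Config) (n : ℕ) : EReal :=
  (n : EReal) - ((∫⁻ ω, nnpart ((n : EReal) - ubar ω n) ∂P : ℝ≥0∞) : EReal)

/-- `α[p] = inf_{n ≥ 1} E_p[ū_n]/n`. -/
noncomputable def alphaVal (P : Measure Config) : EReal :=
  ⨅ n : ℕ, Eubar P (n + 1) / ((n + 1 : ℕ) : EReal)

/-- `ξ_n^A` : sites at level `n` reachable from `{0} × A`. -/
def xiA (ω : Config) (A : Set ℤ) (n : ℕ) : Set ℤ :=
  {x | ∃ y ∈ A, lat (0, y) ∧ conn ω (0, y) ((n : ℤ), x)}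

/-- `τ^A = inf{n ≥ 0 : ξ_n^A = ∅}`, as an extended natural number. -/
noncomputable def tauA (ω : Config) (A : Set ℤ) : ℕ∞ :=
  sInf {c : ℕ∞ | ∃ n : ℕ, c = (n : ℕ∞) ∧ xiA ω A n = ∅}

namespace Stmt5

lemma connRefl (ω : Config) {x : ℤ × ℤ} (hx : lat x) : conn ω x x :=
  ⟨0, fun _ => x, rfl, rfl, fun _ _ => hx, fun i h => absurd h (Nat.not_lt_zero i), fun i h => absurd h (Nat.not_lt_zero i)⟩

lemma connStep (ω : Config) {x y z : ℤ × ℤ} (h : conn ω x y) (ho : ω y = true)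
    (hz : lat z) (hd : rotStep (z - y)) : conn ω x z := by
  obtain ⟨k, c, h0, hk, hlat, hstep, hopen⟩ := h
  refine ⟨k + 1, fun i => if i ≤ k then c i else z, by simp [h0], by simp, ?_, ?_, ?_⟩
  · intro i hi
    by_cases hik : i ≤ k
    · simpa [hik] using hlat i hik
    · simpa [hik] using hz
  · intro i hi
    rcases Nat.lt_or_ge i k with hik | hik
    · simpa [Nat.le_of_lt hik, Nat.succ_le_of_lt hik] using hstep i hik
    · have : i = k := by omega
      subst this
      simpa [hk] using hd
  · intro i hi
    rcases Nat.lt_or_ge i k with hik | hik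
    · simpa [Nat.le_of_lt hik] using hopen i hik
    · have : i = k := by omega
      subst this
      simpa [hk] using ho

lemma connLatEnd (ω : Config) {x y : ℤ × ℤ} (h : conn ω x y) : lat y := by
  obtain ⟨k, c, h0, hk, hlat, _, _⟩ := h
  rw [← hk]; exact hlat k le_rfl

lemma connLatStart (ω : Config) {x y : ℤ × ℤ} (h : conn ω x y) : lat x := by
  obtain ⟨k, c, h0, hk, hlat, _, _⟩ := h
  rw [← h0]; exact hlat 0 (Nat.zero_le k)

/-- unit-step reparametrization of a path: vertex `i` is `(s+i, f i)`;
points with odd coordinate-sum are virtual midpoints of `(2,0)` jumps. -/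
def UPath (ω : Config) (s k : ℕ) (f : ℕ → ℤ) : Prop :=
  Even ((s:ℤ) + f 0) ∧
  (∀ i < k, |f (i+1) - f i| ≤ 1) ∧
  (∀ i ≤ k, ¬ Even ((s:ℤ) + i + f i) → i < k ∧ f (i+1) = f i) ∧
  (∀ i < k, Even ((s:ℤ) + i + f i) → ω ((s:ℤ) + i, f i) = true)

lemma upath_end_even {ω : Config} {s k f} (h : UPath ω s k f) : Even ((s:ℤ) + k + f k) := by
  by_contra hodd
  exact absurd (h.2.2.1 k le_rfl hodd).1 (lt_irrefl k)

lemma upath_prefix {ω : Config} {s k f} (h : UPath ω s k f) {k' : ℕ} (hk' : k' ≤ k)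
    (hreal : Even ((s:ℤ) + k' + f k')) : UPath ω s k' f := by
  obtain ⟨h1, h2, h3, h4⟩ := h
  refine ⟨h1, fun i hi => h2 i (lt_of_lt_of_le hi hk'), ?_, fun i hi he => h4 i (lt_of_lt_of_le hi hk') he⟩
  intro i hi hodd
  rcases lt_or_eq_of_le hi with hi' | hi'
  · exact ⟨hi', (h3 i (le_trans hi hk') hodd).2⟩
  · subst hi'; exact absurd hreal hodd

lemma upath_bound {ω : Config} {s k f} (h : UPath ω s k f) :
    ∀ i ≤ k, f 0 - i ≤ f i ∧ f i ≤ f 0 + i := by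
  intro i
  induction i with
  | zero => intro _; simp
  | succ n ihn =>
    intro hi
    have hn := ihn (le_trans (Nat.le_succ n) hi)
    have hs := h.2.1 n (by omega)
    have := abs_le.mp hs
    constructor <;> [push_cast; push_cast] <;> omega

lemma conn_of_upath (ω : Config) : ∀ (k s : ℕ) (f : ℕ → ℤ), UPath ω s k f →
    conn ω ((s:ℤ), f 0) ((s:ℤ) + k, f k) := by
  intro k
  induction k using Nat.strong_induction_on with
  | _ k ih =>
    intro s f h
    match k, h with
    | 0, h => simpa using connRefl ω (x := ((s:ℤ), f 0)) ⟨by positivity, by simpa using h.1⟩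
    | (m+1), h =>
      have hend : Even ((s:ℤ) + (↑(m+1):ℤ) + f (m+1)) := upath_end_even h
      by_cases hre : Even ((s:ℤ) + m + f m)
      · have hp : UPath ω s m f := upath_prefix h (Nat.le_succ m) hre
        have hc := ih m (Nat.lt_succ_self m) s f hp
        have hd1 := abs_le.mp (h.2.1 m (Nat.lt_succ_self m))
        have hd : f (m+1) - f m = 1 ∨ f (m+1) - f m = -1 := by
          rcases hre with ⟨a, ha⟩; rcases hend with ⟨b, hb⟩; push_cast at hb; omega
        have ho := h.2.2.2 m (Nat.lt_succ_self m) hre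
        have hlatz : lat ((s:ℤ) + (↑(m+1):ℤ), f (m+1)) := ⟨by positivity, hend⟩
        have hrot : rotStep (((s:ℤ) + (↑(m+1):ℤ), f (m+1)) - ((s:ℤ) + (m:ℤ), f m)) := by
          rcases hd with hd | hd
          · left
            simp only [Prod.mk_sub_mk, Prod.mk.injEq]
            exact ⟨by push_cast; ring, by omega⟩
          · right; right
            simp only [Prod.mk_sub_mk, Prod.mk.injEq]
            exact ⟨by push_cast; ring, by omega⟩
        exact connStep ω hc ho hlatz hrot
      · obtain ⟨-, hflat⟩ := h.2.2.1 m (Nat.le_succ m) hre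
        match m, h, hre, hflat, hend with
        | 0, h, hre, hflat, hend => exact absurd h.1 (by simpa using hre)
        | (p+1), h, hre, hflat, hend =>
          have hd1 := abs_le.mp (h.2.1 p (by omega))
          have hflat2 : f (p+1) = f p := by
            by_contra hne
            have hodd2 : ¬ Even ((s:ℤ) + p + f p) := by
              rintro ⟨a, ha⟩
              apply hre
              have hd : f (p+1) - f p = 1 ∨ f (p+1) - f p = -1 := by omega
              rcases hd with hd | hd
              · exact ⟨a+1, by push_cast; omega⟩
              · exact ⟨a, by push_cast; omega⟩
            exact hne (h.2.2.1 p (by omega) hodd2).2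
          have hpre : Even ((s:ℤ) + p + f p) := by
            by_contra hodd2
            apply hre
            rcases Int.not_even_iff_odd.mp hodd2 with ⟨a, ha⟩
            exact ⟨a+1, by push_cast; omega⟩
          have hp : UPath ω s p f := upath_prefix h (by omega) hpre
          have hc := ih p (by omega) s f hp
          have ho := h.2.2.2 p (by omega) hpre
          have e1 : f (p+1+1) = f p := hflat.trans hflat2
          have hlatz : lat ((s:ℤ) + (↑(p+1+1):ℤ), f (p+1+1)) := ⟨by positivity, hend⟩
          have hrot : rotStep (((s:ℤ) + (↑(p+1+1):ℤ), f (p+1+1)) - ((s:ℤ) + (p:ℤ), f p)) := by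
            right; left
            simp only [Prod.mk_sub_mk, Prod.mk.injEq]
            exact ⟨by push_cast; ring, by omega⟩
          exact connStep ω hc ho hlatz hrot

lemma upath_extend1 {ω : Config} {s k : ℕ} {f : ℕ → ℤ} (h : UPath ω s k f)
    (ho : ω ((s:ℤ) + k, f k) = true) {d : ℤ} (hd : d = 1 ∨ d = -1) :
    UPath ω s (k+1) (fun t => if t ≤ k then f t else f k + d) := by
  have hend := upath_end_even h
  obtain ⟨h1, h2, h3, h4⟩ := h
  refine ⟨by simpa using h1, ?_, ?_, ?_⟩
  · intro i hi
    rcases Nat.lt_or_ge i k with hik | hik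
    · simpa [Nat.le_of_lt hik, Nat.succ_le_of_lt hik] using h2 i hik
    · have hik2 : i = k := by omega
      subst hik2
      simp only [if_neg (by omega : ¬ i+1 ≤ i), if_pos (le_refl i)]
      have : f i + d - f i = d := by ring
      rw [this]; rcases hd with rfl | rfl <;> norm_num
  · intro i hi hodd
    rcases Nat.lt_or_ge i k with hik | hik
    · simp only [if_pos (Nat.le_of_lt hik)] at hodd
      obtain ⟨hik', hfl⟩ := h3 i (Nat.le_of_lt hik) hodd
      exact ⟨by omega, by simp only [if_pos (Nat.succ_le_of_lt hik), if_pos (Nat.le_of_lt hik)]; exact hfl⟩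
    · rcases Nat.lt_or_ge k i with hik' | hik'
      · have hik2 : i = k + 1 := by omega
        subst hik2
        exfalso
        apply hodd
        simp only [if_neg (by omega : ¬ k+1 ≤ k)]
        rcases hend with ⟨a, ha⟩
        rcases hd with rfl | rfl
        · exact ⟨a+1, by push_cast at ha ⊢; omega⟩
        · exact ⟨a, by push_cast at ha ⊢; omega⟩
      · have hik2 : i = k := by omega
        subst hik2
        simp only [if_pos (le_refl i)] at hodd
        exact absurd hend hodd
  · intro i hi heven
    rcases Nat.lt_or_ge i k with hik | hik
    · simp only [if_pos (Nat.le_of_lt hik)] at heven ⊢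
      exact h4 i hik heven
    · have hik2 : i = k := by omega
      subst hik2
      simp only [if_pos (le_refl i)]
      exact ho

lemma upath_extend2 {ω : Config} {s k : ℕ} {f : ℕ → ℤ} (h : UPath ω s k f)
    (ho : ω ((s:ℤ) + k, f k) = true) :
    UPath ω s (k+2) (fun t => if t ≤ k then f t else f k) := by
  have hend := upath_end_even h
  obtain ⟨h1, h2, h3, h4⟩ := h
  refine ⟨by simpa using h1, ?_, ?_, ?_⟩
  · intro i hi
    rcases Nat.lt_or_ge i k with hik | hik
    · simpa [Nat.le_of_lt hik, Nat.succ_le_of_lt hik] using h2 i hik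
    · rcases Nat.lt_or_ge k i with hik' | hik'
      · simp only [if_neg (by omega : ¬ i+1 ≤ k), if_neg (by omega : ¬ i ≤ k)]
        simp
      · have hik2 : i = k := by omega
        subst hik2
        simp only [if_neg (by omega : ¬ i+1 ≤ i), if_pos (le_refl i)]
        simp
  · intro i hi hodd
    rcases Nat.lt_or_ge i k with hik | hik
    · simp only [if_pos (Nat.le_of_lt hik)] at hodd
      obtain ⟨hik', hfl⟩ := h3 i (Nat.le_of_lt hik) hodd
      exact ⟨by omega, by simp only [if_pos (Nat.succ_le_of_lt hik), if_pos (Nat.le_of_lt hik)]; exact hfl⟩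
    · rcases Nat.lt_or_ge k i with hik' | hik'
      · rcases Nat.lt_or_ge (k+1) i with hik'' | hik''
        · have hik2 : i = k + 2 := by omega
          subst hik2
          exfalso
          apply hodd
          simp only [if_neg (by omega : ¬ k+2 ≤ k)]
          rcases hend with ⟨a, ha⟩
          exact ⟨a+1, by push_cast at ha ⊢; omega⟩
        · have hik2 : i = k + 1 := by omega
          subst hik2
          refine ⟨by omega, ?_⟩
          simp only [if_neg (by omega : ¬ k+1+1 ≤ k), if_neg (by omega : ¬ k+1 ≤ k)]
      · have hik2 : i = k := by omega
        subst hik2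
        simp only [if_pos (le_refl i)] at hodd
        exact absurd hend hodd
  · intro i hi heven
    rcases Nat.lt_or_ge i k with hik | hik
    · simp only [if_pos (Nat.le_of_lt hik)] at heven ⊢
      exact h4 i hik heven
    · rcases Nat.lt_or_ge k i with hik' | hik'
      · have hik2 : i = k + 1 := by omega
        subst hik2
        exfalso
        simp only [if_neg (by omega : ¬ k+1 ≤ k)] at heven
        rcases hend with ⟨a, ha⟩
        rcases heven with ⟨b, hb⟩
        push_cast at ha hb; omega
      · have hik2 : i = k := by omega
        subst hik2
        simp only [if_pos (le_refl i)]
        exact ho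

lemma upath_of_conn_aux (ω : Config) : ∀ (k0 : ℕ) (c : ℕ → ℤ × ℤ),
    (∀ i ≤ k0, lat (c i)) → (∀ i < k0, rotStep (c (i+1) - c i)) → (∀ i < k0, ω (c i) = true) →
    ∃ (s k : ℕ) (f : ℕ → ℤ), (s:ℤ) = (c 0).1 ∧ (s:ℤ) + k = (c k0).1 ∧ f 0 = (c 0).2 ∧
      f k = (c k0).2 ∧ UPath ω s k f := by
  intro k0
  induction k0 with
  | zero =>
    intro c hlat _ _
    have h0 := hlat 0 le_rfl
    have hcast : (((c 0).1.toNat : ℤ)) = (c 0).1 := Int.toNat_of_nonneg h0.1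
    refine ⟨(c 0).1.toNat, 0, fun _ => (c 0).2, hcast, by simpa using hcast, rfl, rfl, ?_, ?_, ?_, ?_⟩
    · rw [hcast]; exact h0.2
    · intro i hi; omega
    · intro i hi hodd
      interval_cases i
      exfalso; apply hodd; simpa [hcast] using h0.2
    · intro i hi; omega
  | succ n ihn =>
    intro c hlat hstep hopen
    obtain ⟨s, k, f, hs, hsk, hf0, hfk, hu⟩ := ihn c (fun i hi => hlat i (by omega))
      (fun i hi => hstep i (by omega)) (fun i hi => hopen i (by omega))
    have hcn : ((s:ℤ) + k, f k) = c n := by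
      rw [Prod.ext_iff]; exact ⟨hsk, hfk⟩
    have ho : ω ((s:ℤ) + k, f k) = true := by rw [hcn]; exact hopen n (Nat.lt_succ_self n)
    have hd := hstep n (Nat.lt_succ_self n)
    rcases hd with hd | hd | hd
    · have e1 : (c (n+1)).1 - (c n).1 = 1 := by rw [← Prod.fst_sub, hd]
      have e2 : (c (n+1)).2 - (c n).2 = 1 := by rw [← Prod.snd_sub, hd]
      refine ⟨s, k+1, _, hs, ?_, ?_, ?_, upath_extend1 hu ho (Or.inl rfl)⟩
      · push_cast; omega
      · simp only [if_pos (Nat.zero_le k)]; exact hf0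
      · simp only [if_neg (by omega : ¬ k+1 ≤ k)]; omega
    · have e1 : (c (n+1)).1 - (c n).1 = 2 := by rw [← Prod.fst_sub, hd]
      have e2 : (c (n+1)).2 - (c n).2 = 0 := by rw [← Prod.snd_sub, hd]
      refine ⟨s, k+2, _, hs, ?_, ?_, ?_, upath_extend2 hu ho⟩
      · push_cast; omega
      · simp only [if_pos (Nat.zero_le k)]; exact hf0
      · simp only [if_neg (by omega : ¬ k+2 ≤ k)]; omega
    · have e1 : (c (n+1)).1 - (c n).1 = 1 := by rw [← Prod.fst_sub, hd]
      have e2 : (c (n+1)).2 - (c n).2 = -1 := by rw [← Prod.snd_sub, hd]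
      refine ⟨s, k+1, _, hs, ?_, ?_, ?_, upath_extend1 hu ho (Or.inr rfl)⟩
      · push_cast; omega
      · simp only [if_pos (Nat.zero_le k)]; exact hf0
      · simp only [if_neg (by omega : ¬ k+1 ≤ k)]; omega

lemma upath_of_conn (ω : Config) {z w : ℤ × ℤ} (h : conn ω z w) :
    ∃ (s k : ℕ) (f : ℕ → ℤ), (s:ℤ) = z.1 ∧ (s:ℤ) + k = w.1 ∧ f 0 = z.2 ∧ f k = w.2 ∧
      UPath ω s k f := by
  obtain ⟨k0, c, h0, hk, hlat, hstep, hopen⟩ := h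
  have := upath_of_conn_aux ω k0 c hlat hstep hopen
  rw [h0, hk] at this
  exact this
lemma upath_splice {ω : Config} {s₁ k₁ s₂ k₂ : ℕ} {f g : ℕ → ℤ}
    (hf : UPath ω s₁ k₁ f) (hg : UPath ω s₂ k₂ g) {i j : ℕ}
    (hik : i ≤ k₁) (hjk : j ≤ k₂) (hcol : s₁ + i = s₂ + j) (hval : f i = g j) :
    UPath ω s₁ (i + (k₂ - j)) (fun t => if t ≤ i then f t else g (j + (t - i))) := by
  have colEq : ∀ t : ℕ, i ≤ t → ((s₁:ℤ) + t) = (s₂:ℤ) + ((j + (t - i) : ℕ):ℤ) := by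
    intro t ht; push_cast; omega
  refine ⟨by simpa using hf.1, ?_, ?_, ?_⟩
  · intro t ht
    rcases Nat.lt_or_ge t i with hti | hti
    · simp only [if_pos (Nat.le_of_lt hti), if_pos (Nat.succ_le_of_lt hti)]
      exact hf.2.1 t (by omega)
    · rcases Nat.lt_or_ge i t with hti' | hti'
      · simp only [if_neg (by omega : ¬ t ≤ i), if_neg (by omega : ¬ t+1 ≤ i)]
        have e1 : j + (t + 1 - i) = (j + (t - i)) + 1 := by omega
        rw [e1]
        exact hg.2.1 (j + (t - i)) (by omega)
      · have : t = i := by omega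
        subst this
        simp only [if_pos (le_refl t), if_neg (by omega : ¬ t+1 ≤ t)]
        have e1 : j + (t + 1 - t) = j + 1 := by omega
        rw [e1, hval]
        exact hg.2.1 j (by omega)
  · intro t ht hodd
    rcases Nat.lt_or_ge t i with hti | hti
    · simp only [if_pos (Nat.le_of_lt hti)] at hodd
      obtain ⟨h1, h2⟩ := hf.2.2.1 t (by omega) hodd
      refine ⟨by omega, ?_⟩
      simp only [if_pos (Nat.le_of_lt hti), if_pos (Nat.succ_le_of_lt hti)]
      exact h2
    · have hrw : (if t ≤ i then f t else g (j + (t - i))) = g (j + (t - i)) := by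
        rcases Nat.lt_or_ge i t with h' | h'
        · exact if_neg (by omega)
        · have : t = i := by omega
          subst this
          simp only [if_pos (le_refl t)]
          have : j + (t - t) = j := by omega
          rw [this, hval]
      beta_reduce at hodd
      rw [hrw] at hodd
      have hodd' : ¬ Even ((s₂:ℤ) + ((j + (t - i) : ℕ):ℤ) + g (j + (t - i))) := by
        rw [← colEq t hti]; exact hodd
      obtain ⟨h1, h2⟩ := hg.2.2.1 (j + (t - i)) (by omega) hodd'
      refine ⟨by omega, ?_⟩
      have e1 : ¬ (t + 1 ≤ i) := by omega
      have e2 : j + (t + 1 - i) = (j + (t - i)) + 1 := by omega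
      beta_reduce
      simp only [if_neg e1, e2, h2, hrw]
  · intro t ht heven
    rcases Nat.lt_or_ge t i with hti | hti
    · simp only [if_pos (Nat.le_of_lt hti)] at heven ⊢
      exact hf.2.2.2 t (by omega) heven
    · have hrw : (if t ≤ i then f t else g (j + (t - i))) = g (j + (t - i)) := by
        rcases Nat.lt_or_ge i t with h' | h'
        · exact if_neg (by omega)
        · have : t = i := by omega
          subst this
          simp only [if_pos (le_refl t)]
          have : j + (t - t) = j := by omega
          rw [this, hval]
      beta_reduce at heven ⊢
      rw [hrw] at heven ⊢
      rw [colEq t hti] at heven ⊢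
      exact hg.2.2.2 (j + (t - i)) (by omega) heven

lemma conn_splice (ω : Config) {s₁ k₁ s₂ k₂ : ℕ} {f g : ℕ → ℤ}
    (hf : UPath ω s₁ k₁ f) (hg : UPath ω s₂ k₂ g) {i j : ℕ}
    (hik : i ≤ k₁) (hjk : j ≤ k₂) (hcol : s₁ + i = s₂ + j) (hval : f i = g j) :
    conn ω ((s₁:ℤ), f 0) (((s₂:ℤ) + k₂), g k₂) := by
  have hc := conn_of_upath ω (i + (k₂ - j)) s₁ _ (upath_splice hf hg hik hjk hcol hval)
  have e0 : (if 0 ≤ i then f 0 else g (j + (0 - i))) = f 0 := if_pos (Nat.zero_le i)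
  have eK : (if i + (k₂ - j) ≤ i then f (i + (k₂ - j)) else g (j + (i + (k₂ - j) - i))) = g k₂ := by
    rcases Nat.eq_or_lt_of_le hjk with hjk' | hjk'
    · have : k₂ - j = 0 := by omega
      simp only [this, Nat.add_zero, if_pos (le_refl i)]
      rw [hval, hjk']
    · have h1 : ¬ (i + (k₂ - j) ≤ i) := by omega
      have h2 : j + (i + (k₂ - j) - i) = k₂ := by omega
      rw [if_neg h1, h2]
  have ecol : (s₁:ℤ) + ((i + (k₂ - j) : ℕ):ℤ) = (s₂:ℤ) + k₂ := by push_cast; omega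
  simp only [e0, eK] at hc
  rw [ecol] at hc
  exact hc

lemma upath_cross {ω : Config} {s₁ k₁ s₂ k₂ : ℕ} {f g : ℕ → ℤ}
    (hf : UPath ω s₁ k₁ f) (hg : UPath ω s₂ k₂ g) {a N : ℕ}
    (ha1 : s₁ ≤ a) (ha2 : s₂ ≤ a) (haN : a ≤ N) (hN1 : N ≤ s₁ + k₁) (hN2 : N ≤ s₂ + k₂)
    (hstart : f (a - s₁) ≤ g (a - s₂)) (hend : g (N - s₂) ≤ f (N - s₁)) :
    ∃ t, a ≤ t ∧ t ≤ N ∧ s₁ ≤ t ∧ s₂ ≤ t ∧ f (t - s₁) = g (t - s₂) := by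
  have key : ∀ (n b : ℕ), s₁ ≤ b → s₂ ≤ b → b ≤ N → N - b = n → f (b - s₁) ≤ g (b - s₂) →
      ∃ t, b ≤ t ∧ t ≤ N ∧ f (t - s₁) = g (t - s₂) := by
    intro n
    induction n with
    | zero =>
      intro b h1 h2 h3 h4 h5
      have hb : b = N := by omega
      subst hb
      exact ⟨b, le_rfl, le_rfl, le_antisymm h5 hend⟩
    | succ n ihn =>
      intro b h1 h2 h3 h4 h5
      by_cases h0 : f (b - s₁) = g (b - s₂)
      · exact ⟨b, le_rfl, h3, h0⟩
      have hbN : b < N := by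
        rcases Nat.lt_or_ge b N with h | h
        · exact h
        · exfalso; have : b = N := by omega
          subst this; exact h0 (le_antisymm h5 hend)
      have hlt : f (b - s₁) < g (b - s₂) := lt_of_le_of_ne h5 h0
      have hsf := abs_le.mp (hf.2.1 (b - s₁) (by omega))
      have hsg := abs_le.mp (hg.2.1 (b - s₂) (by omega))
      have hidx1 : b + 1 - s₁ = (b - s₁) + 1 := by omega
      have hidx2 : b + 1 - s₂ = (b - s₂) + 1 := by omega
      have hnext : f (b + 1 - s₁) ≤ g (b + 1 - s₂) := by
        rw [hidx1, hidx2]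
        by_contra hgt
        push_neg at hgt
        have e1 : f ((b-s₁)+1) = f (b-s₁) + 1 := by omega
        have e2 : g ((b-s₂)+1) = g (b-s₂) - 1 := by omega
        have ed : g (b-s₂) = f (b-s₁) + 1 := by omega
        by_cases hev : Even ((s₁:ℤ) + ((b - s₁ : ℕ):ℤ) + f (b - s₁))
        · have hoddg : ¬ Even ((s₂:ℤ) + ((b - s₂ : ℕ):ℤ) + g (b - s₂)) := by
            rcases hev with ⟨x, hx⟩
            rintro ⟨y, hy⟩
            omega
          have := (hg.2.2.1 (b - s₂) (by omega) hoddg).2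
          omega
        · have := (hf.2.2.1 (b - s₁) (by omega) hev).2
          omega
      obtain ⟨t, ht1, ht2, ht3⟩ := ihn (b+1) (by omega) (by omega) (by omega) (by omega) hnext
      exact ⟨t, by omega, ht2, ht3⟩
  obtain ⟨t, ht1, ht2, ht3⟩ := key (N - a) a ha1 ha2 haN rfl hstart
  exact ⟨t, ht1, ht2, by omega, by omega, ht3⟩
lemma coeZ_le_coeZ {a b : ℤ} : ((a:ℝ):EReal) ≤ ((b:ℝ):EReal) ↔ a ≤ b := by
  rw [EReal.coe_le_coe_iff]; exact Int.cast_le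

lemma coeZ_lt_coeZ {a b : ℤ} : ((a:ℝ):EReal) < ((b:ℝ):EReal) ↔ a < b := by
  rw [EReal.coe_lt_coe_iff]; exact Int.cast_lt

lemma supZ_coe_le {S : Set ℤ} {x : ℤ} (hx : x ∈ S) : ((x:ℝ):EReal) ≤ supZ S :=
  le_sSup ⟨x, hx, rfl⟩

lemma infZ_le_coe {S : Set ℤ} {x : ℤ} (hx : x ∈ S) : infZ S ≤ ((x:ℝ):EReal) :=
  sInf_le ⟨x, hx, rfl⟩

lemma supZ_eq_max {S : Set ℤ} {B : ℤ} (hne : S.Nonempty) (hB : ∀ x ∈ S, x ≤ B) :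
    ∃ M, M ∈ S ∧ (∀ x ∈ S, x ≤ M) ∧ supZ S = ((M:ℝ):EReal) := by
  obtain ⟨M, hM, hub⟩ := Int.exists_greatest_of_bdd (P := (· ∈ S)) ⟨B, fun z hz => hB z hz⟩ hne
  refine ⟨M, hM, hub, le_antisymm ?_ (supZ_coe_le hM)⟩
  apply sSup_le
  rintro e ⟨x, hx, rfl⟩
  exact coeZ_le_coeZ.mpr (hub x hx)

lemma infZ_eq_min {S : Set ℤ} {B : ℤ} (hne : S.Nonempty) (hB : ∀ x ∈ S, B ≤ x) :
    ∃ M, M ∈ S ∧ (∀ x ∈ S, M ≤ x) ∧ infZ S = ((M:ℝ):EReal) := by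
  obtain ⟨M, hM, hub⟩ := Int.exists_least_of_bdd (P := (· ∈ S)) ⟨B, fun z hz => hB z hz⟩ hne
  refine ⟨M, hM, hub, le_antisymm (infZ_le_coe hM) ?_⟩
  apply le_sInf
  rintro e ⟨x, hx, rfl⟩
  exact coeZ_le_coeZ.mpr (hub x hx)

lemma xibar_upath {ω : Config} {n : ℕ} {x : ℤ} (hx : x ∈ xibar ω n) :
    ∃ (s k : ℕ) (f : ℕ → ℤ), s ≤ 1 ∧ s + k = n ∧ f 0 ≤ 0 ∧ f k = x ∧ UPath ω s k f := by
  obtain ⟨y, hy, hc | hc⟩ := hx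
  · obtain ⟨s, k, f, hs, hsk, hf0, hfk, hu⟩ := upath_of_conn ω hc
    simp only at hs hsk hf0 hfk
    exact ⟨s, k, f, by omega, by omega, by omega, hfk, hu⟩
  · obtain ⟨s, k, f, hs, hsk, hf0, hfk, hu⟩ := upath_of_conn ω hc
    simp only at hs hsk hf0 hfk
    exact ⟨s, k, f, by omega, by omega, by omega, hfk, hu⟩

lemma xiunder_upath {ω : Config} {n : ℕ} {x : ℤ} (hx : x ∈ xiunder ω n) :
    ∃ (s k : ℕ) (f : ℕ → ℤ), s ≤ 1 ∧ s + k = n ∧ 0 ≤ f 0 ∧ f k = x ∧ UPath ω s k f := by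
  obtain ⟨y, hy, hc | hc⟩ := hx
  · obtain ⟨s, k, f, hs, hsk, hf0, hfk, hu⟩ := upath_of_conn ω hc
    simp only at hs hsk hf0 hfk
    exact ⟨s, k, f, by omega, by omega, by omega, hfk, hu⟩
  · obtain ⟨s, k, f, hs, hsk, hf0, hfk, hu⟩ := upath_of_conn ω hc
    simp only at hs hsk hf0 hfk
    exact ⟨s, k, f, by omega, by omega, by omega, hfk, hu⟩

lemma xi_upath {ω : Config} {n : ℕ} {x : ℤ} (hx : x ∈ xi ω n) :
    ∃ (f : ℕ → ℤ), f 0 = 0 ∧ f n = x ∧ UPath ω 0 n f := by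
  obtain ⟨s, k, f, hs, hsk, hf0, hfk, hu⟩ := upath_of_conn ω hx
  simp only at hs hsk hf0 hfk
  have hs0 : s = 0 := by omega
  subst hs0
  have hkn : k = n := by omega
  subst hkn
  exact ⟨f, hf0, hfk, hu⟩

lemma mem_xibar_le {ω : Config} {n : ℕ} {x : ℤ} (hx : x ∈ xibar ω n) : x ≤ n := by
  obtain ⟨s, k, f, hs1, hsk, hf0, hfk, hu⟩ := xibar_upath hx
  have := (upath_bound hu k le_rfl).2
  omega

lemma mem_xiunder_ge {ω : Config} {n : ℕ} {x : ℤ} (hx : x ∈ xiunder ω n) : -(n:ℤ) ≤ x := by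
  obtain ⟨s, k, f, hs1, hsk, hf0, hfk, hu⟩ := xiunder_upath hx
  have := (upath_bound hu k le_rfl).1
  omega

lemma mem_xibar_even {ω : Config} {n : ℕ} {x : ℤ} (hx : x ∈ xibar ω n) : Even ((n:ℤ) + x) := by
  obtain ⟨y, hy, hc | hc⟩ := hx
  · exact (connLatEnd ω hc).2
  · exact (connLatEnd ω hc).2

lemma mem_xi_even {ω : Config} {n : ℕ} {x : ℤ} (hx : x ∈ xi ω n) : Even ((n:ℤ) + x) :=
  (connLatEnd ω hx).2

lemma mem_xi_xibar {ω : Config} {n : ℕ} {x : ℤ} (hx : x ∈ xi ω n) : x ∈ xibar ω n :=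
  ⟨0, le_rfl, Or.inl hx⟩

lemma mem_xi_xiunder {ω : Config} {n : ℕ} {x : ℤ} (hx : x ∈ xi ω n) : x ∈ xiunder ω n :=
  ⟨0, le_rfl, Or.inl hx⟩

lemma xi_zero_mem (ω : Config) : (0:ℤ) ∈ xi ω 0 := by
  have : conn ω (0, 0) (((0:ℕ):ℤ), 0) := by
    have := connRefl ω (x := ((0:ℤ),(0:ℤ))) ⟨le_rfl, by simp⟩
    simpa using this
  exact this

lemma lemma_A {ω : Config} {m : ℕ} (h : ubar ω m < lunder ω m) : xi ω m = ∅ := by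
  rcases Nat.eq_zero_or_pos m with hm | hm
  · subst hm
    rw [ubar, lunder] at h
    simp at h
  · have hm0 : m ≠ 0 := by omega
    rw [ubar, lunder, if_neg hm0, if_neg hm0] at h
    ext x
    simp only [Set.mem_empty_iff_false, iff_false]
    intro hx
    have h1 : ((x:ℝ):EReal) ≤ supZ (xibar ω m) := supZ_coe_le (mem_xi_xibar hx)
    have h2 : infZ (xiunder ω m) ≤ ((x:ℝ):EReal) := infZ_le_coe (mem_xi_xiunder hx)
    exact absurd (h1.trans_lt (h.trans_le h2)) (lt_irrefl _)

lemma lemma_T0 {ω : Config} (h1 : xi ω 1 = ∅) : ubar ω 1 < lunder ω 1 := by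
  have ho : ω (0, 0) ≠ true := by
    intro hot
    have h00 : conn ω (0, 0) (0, 0) := connRefl ω ⟨le_rfl, by simp⟩
    have hc : conn ω (0, 0) (((1:ℕ):ℤ), 1) := by
      refine connStep ω h00 hot ⟨by norm_num, by norm_num⟩ ?_
      left; simp [Prod.ext_iff]
    have : (1:ℤ) ∈ xi ω 1 := hc
    rw [h1] at this; exact this
  have hub : ∀ x ∈ xibar ω 1, x ≤ -1 := by
    intro x hx
    obtain ⟨s, k, f, hs1, hsk, hf0, hfk, hu⟩ := xibar_upath hx
    interval_cases s
    · have hk : k = 1 := by omega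
      subst hk
      rcases hu.1 with ⟨a, ha⟩
      have hf00 : f 0 = 0 ∨ f 0 ≤ -2 := by
        simp only [Nat.cast_zero] at ha; omega
      rcases hf00 with hf00 | hf00
      · exfalso
        have heven : Even (((0:ℕ):ℤ) + ((0:ℕ):ℤ) + f 0) := by
          refine ⟨a, ?_⟩; push_cast; simp only [Nat.cast_zero] at ha; omega
        have := hu.2.2.2 0 (by omega) heven
        have hpt : ((((0:ℕ):ℤ)) + ((0:ℕ):ℤ), f 0) = ((0:ℤ), (0:ℤ)) := by
          rw [Prod.ext_iff]; constructor
          · simp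
          · simpa using hf00
        rw [hpt] at this
        exact ho this
      · have := abs_le.mp (hu.2.1 0 (by omega))
        simp only [Nat.zero_add] at this
        omega
    · have hk : k = 0 := by omega
      subst hk
      rcases hu.1 with ⟨a, ha⟩
      simp only [Nat.cast_one] at ha
      omega
  have hlb : ∀ x ∈ xiunder ω 1, 1 ≤ x := by
    intro x hx
    obtain ⟨s, k, f, hs1, hsk, hf0, hfk, hu⟩ := xiunder_upath hx
    interval_cases s
    · have hk : k = 1 := by omega
      subst hk
      rcases hu.1 with ⟨a, ha⟩
      have hf00 : f 0 = 0 ∨ 2 ≤ f 0 := by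
        simp only [Nat.cast_zero] at ha; omega
      rcases hf00 with hf00 | hf00
      · exfalso
        have heven : Even (((0:ℕ):ℤ) + ((0:ℕ):ℤ) + f 0) := by
          refine ⟨a, ?_⟩; push_cast; simp only [Nat.cast_zero] at ha; omega
        have := hu.2.2.2 0 (by omega) heven
        have hpt : ((((0:ℕ):ℤ)) + ((0:ℕ):ℤ), f 0) = ((0:ℤ), (0:ℤ)) := by
          rw [Prod.ext_iff]; constructor
          · simp
          · simpa using hf00
        rw [hpt] at this
        exact ho this
      · have := abs_le.mp (hu.2.1 0 (by omega))
        simp only [Nat.zero_add] at this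
        omega
    · have hk : k = 0 := by omega
      subst hk
      rcases hu.1 with ⟨a, ha⟩
      simp only [Nat.cast_one] at ha
      omega
  have hmem1 : (-1 : ℤ) ∈ xibar ω 1 := by
    refine ⟨-1, by norm_num, Or.inr ?_⟩
    have := connRefl ω (x := ((1:ℤ), (-1:ℤ))) ⟨by norm_num, by norm_num⟩
    simpa using this
  have hmem2 : (1 : ℤ) ∈ xiunder ω 1 := by
    refine ⟨1, by norm_num, Or.inr ?_⟩
    have := connRefl ω (x := ((1:ℤ), (1:ℤ))) ⟨by norm_num, by norm_num⟩
    simpa using this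
  rw [ubar, lunder, if_neg one_ne_zero, if_neg one_ne_zero]
  have hu1 : supZ (xibar ω 1) ≤ (((-1:ℤ):ℝ):EReal) := by
    apply sSup_le
    rintro e ⟨x, hx, rfl⟩
    exact coeZ_le_coeZ.mpr (hub x hx)
  have hl1 : (((1:ℤ):ℝ):EReal) ≤ infZ (xiunder ω 1) := by
    apply le_sInf
    rintro e ⟨x, hx, rfl⟩
    exact coeZ_le_coeZ.mpr (hlb x hx)
  exact lt_of_le_of_lt hu1 (lt_of_lt_of_le (coeZ_lt_coeZ.mpr (by norm_num)) hl1)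
lemma lemma_T {ω : Config} {n : ℕ} (hn : 1 ≤ n) (hne : (xi ω n).Nonempty)
    (hemp : xi ω (n+1) = ∅) : ubar ω (n+1) < lunder ω (n+1) := by
  by_contra hcon
  push_neg at hcon
  have hns : (n+1) ≠ 0 := Nat.succ_ne_zero n
  have hxibar_ne : (xibar ω (n+1)).Nonempty := by
    by_contra hc2
    rw [Set.not_nonempty_iff_eq_empty] at hc2
    have hbot : ubar ω (n+1) = ⊥ := by
      rw [ubar, if_neg hns, supZ, hc2]
      simp
    rw [hbot, le_bot_iff, lunder, if_neg hns] at hcon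
    rcases Set.eq_empty_or_nonempty (xiunder ω (n+1)) with he | he
    · rw [infZ, he] at hcon
      simp at hcon
    · have h1 : (((-(n:ℤ)-1 : ℤ):ℝ):EReal) ≤ infZ (xiunder ω (n+1)) := by
        apply le_sInf
        rintro e ⟨z, hz, rfl⟩
        refine coeZ_le_coeZ.mpr ?_
        have := mem_xiunder_ge hz
        push_cast at this
        omega
      rw [hcon] at h1
      exact EReal.coe_ne_bot _ (le_bot_iff.mp h1)
  have hxiunder_ne : (xiunder ω (n+1)).Nonempty := by
    by_contra hc2
    rw [Set.not_nonempty_iff_eq_empty] at hc2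
    have htop : lunder ω (n+1) = ⊤ := by
      rw [lunder, if_neg hns, infZ, hc2]
      simp
    rw [htop, top_le_iff, ubar, if_neg hns] at hcon
    have h1 : supZ (xibar ω (n+1)) ≤ ((((n:ℤ)+1 : ℤ):ℝ):EReal) := by
      apply sSup_le
      rintro e ⟨z, hz, rfl⟩
      refine coeZ_le_coeZ.mpr ?_
      have := mem_xibar_le hz
      push_cast at this
      omega
    rw [hcon] at h1
    exact EReal.coe_ne_top _ (top_le_iff.mp h1)
  obtain ⟨R, hRmem, hRub, hRsup⟩ := supZ_eq_max hxibar_ne (fun x hx => mem_xibar_le hx)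
  obtain ⟨L', hL'mem, hL'lb, hL'inf⟩ := infZ_eq_min hxiunder_ne (fun x hx => mem_xiunder_ge hx)
  have hLR : L' ≤ R := by
    rw [ubar, if_neg hns, lunder, if_neg hns, hRsup, hL'inf] at hcon
    exact coeZ_le_coeZ.mp hcon
  obtain ⟨U, hUmem, hUub, -⟩ := supZ_eq_max hne (fun x hx => mem_xibar_le (mem_xi_xibar hx))
  obtain ⟨L, hLmem, hLlb, -⟩ := infZ_eq_min hne (fun x hx => mem_xiunder_ge (mem_xi_xiunder hx))
  obtain ⟨fσ, hσ0, hσn, hσ⟩ := xi_upath hUmem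
  obtain ⟨fτ, hτ0, hτn, hτ⟩ := xi_upath hLmem
  obtain ⟨s₁, k₁, fπ, hs₁, hsk₁, hπ0, hπk, hπ⟩ := xibar_upath hRmem
  obtain ⟨s₂, k₂, fρ, hs₂, hsk₂, hρ0, hρk, hρ⟩ := xiunder_upath hL'mem
  have hπstep : |fπ (n - s₁ + 1) - fπ (n - s₁)| ≤ 1 := hπ.2.1 (n - s₁) (by omega)
  have hπidx : n - s₁ + 1 = k₁ := by omega
  rw [hπidx, hπk] at hπstep
  have hπstep' := abs_le.mp hπstep
  have hρstep : |fρ (n - s₂ + 1) - fρ (n - s₂)| ≤ 1 := hρ.2.1 (n - s₂) (by omega)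
  have hρidx : n - s₂ + 1 = k₂ := by omega
  rw [hρidx, hρk] at hρstep
  have hρstep' := abs_le.mp hρstep
  by_cases hc1 : fρ (n - s₂) ≤ U
  · have hst : fσ (s₂ - 0) ≤ fρ (s₂ - s₂) := by
      have h01 : s₂ = 0 ∨ s₂ = 1 := by omega
      rcases h01 with h01 | h01 <;> subst h01
      · simp only [Nat.sub_zero, Nat.sub_self, hσ0]
        exact hρ0
      · simp only [Nat.sub_zero, Nat.sub_self]
        have hstep0 := abs_le.mp (hσ.2.1 0 (by omega))
        simp only [Nat.zero_add] at hstep0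
        rcases hρ.1 with ⟨a, ha⟩
        push_cast at ha
        omega
    have hen : fρ (n - s₂) ≤ fσ (n - 0) := by
      simp only [Nat.sub_zero, hσn]
      exact hc1
    obtain ⟨t, ht1, ht2, ht3, ht4, ht5⟩ := upath_cross hσ hρ (a := s₂) (N := n)
      (by omega) le_rfl (by omega) (by omega) (by omega) hst hen
    have hsp := conn_splice ω hσ hρ (i := t) (j := t - s₂) (by omega) (by omega) (by omega)
      (by simpa only [Nat.sub_zero] using ht5)
    have hmem : L' ∈ xi ω (n+1) := by
      have he1 : (((0:ℕ):ℤ), fσ 0) = ((0:ℤ), (0:ℤ)) := by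
        rw [Prod.ext_iff]; exact ⟨by simp, by simp [hσ0]⟩
      have he2 : ((s₂:ℤ) + (k₂:ℤ), fρ k₂) = (((n+1:ℕ):ℤ), L') := by
        rw [Prod.ext_iff]
        constructor
        · push_cast; omega
        · simp [hρk]
      rw [he1, he2] at hsp
      exact hsp
    rw [hemp] at hmem; exact hmem
  by_cases hc2 : L ≤ fπ (n - s₁)
  · have hst : fπ (s₁ - s₁) ≤ fτ (s₁ - 0) := by
      have h01 : s₁ = 0 ∨ s₁ = 1 := by omega
      rcases h01 with h01 | h01 <;> subst h01
      · simp only [Nat.sub_zero, Nat.sub_self, hτ0]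
        exact hπ0
      · simp only [Nat.sub_zero, Nat.sub_self]
        have hstep0 := abs_le.mp (hτ.2.1 0 (by omega))
        simp only [Nat.zero_add] at hstep0
        rcases hπ.1 with ⟨a, ha⟩
        push_cast at ha
        omega
    have hen : fτ (n - 0) ≤ fπ (n - s₁) := by
      simp only [Nat.sub_zero, hτn]
      exact hc2
    obtain ⟨t, ht1, ht2, ht3, ht4, ht5⟩ := upath_cross hπ hτ (a := s₁) (N := n)
      le_rfl (by omega) (by omega) (by omega) (by omega) hst hen
    have hsp := conn_splice ω hτ hπ (i := t) (j := t - s₁) (by omega) (by omega) (by omega)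
      (by simpa only [Nat.sub_zero] using ht5.symm)
    have hmem : R ∈ xi ω (n+1) := by
      have he1 : (((0:ℕ):ℤ), fτ 0) = ((0:ℤ), (0:ℤ)) := by
        rw [Prod.ext_iff]; exact ⟨by simp, by simp [hτ0]⟩
      have he2 : ((s₁:ℤ) + (k₁:ℤ), fπ k₁) = (((n+1:ℕ):ℤ), R) := by
        rw [Prod.ext_iff]
        constructor
        · push_cast; omega
        · simp [hπk]
      rw [he1, he2] at hsp
      exact hsp
    rw [hemp] at hmem; exact hmem
  · push_neg at hc1 hc2
    have hLU : L ≤ U := hLlb U hUmem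
    rcases mem_xi_even hUmem with ⟨a, ha⟩
    rcases mem_xibar_even hRmem with ⟨b, hb⟩
    push_cast at hb
    omega
lemma xiA_eq (ω : Config) (n : ℕ) : xiA ω {0} n = xi ω n := by
  ext x
  simp only [xiA, xi, Set.mem_setOf_eq, Set.mem_singleton_iff]
  constructor
  · rintro ⟨y, rfl, -, hc⟩; exact hc
  · intro hc; exact ⟨0, rfl, ⟨le_rfl, by simp⟩, hc⟩
end Stmt5

/-- For every configuration, `τ = inf{m ≥ 0 : ℓ̲_m > ū_m}`. -/
theorem stmt_5 (ω : Config) :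
    tauA ω {0} = sInf {c : ℕ∞ | ∃ m : ℕ, c = (m : ℕ∞) ∧ ubar ω m < lunder ω m} := by
  classical
  rw [tauA]
  apply le_antisymm
  · apply le_sInf
    rintro c ⟨m, rfl, hm⟩
    apply sInf_le
    exact ⟨m, rfl, by rw [Stmt5.xiA_eq]; exact Stmt5.lemma_A hm⟩
  · apply le_sInf
    rintro c ⟨n, rfl, hn⟩
    rw [Stmt5.xiA_eq] at hn
    have hex : ∃ k, xi ω k = ∅ := ⟨n, hn⟩
    have hn₀ : xi ω (Nat.find hex) = ∅ := Nat.find_spec hex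
    have hn₀le : Nat.find hex ≤ n := Nat.find_le hn
    have hn₀pos : 1 ≤ Nat.find hex := by
      rcases Nat.eq_zero_or_pos (Nat.find hex) with h | h
      · exfalso
        rw [h, Set.eq_empty_iff_forall_notMem] at hn₀
        exact hn₀ 0 (Stmt5.xi_zero_mem ω)
      · exact h
    have hQ : ubar ω (Nat.find hex) < lunder ω (Nat.find hex) := by
      rcases Nat.lt_or_ge (Nat.find hex) 2 with h2 | h2
      · have h1 : Nat.find hex = 1 := by omega
        rw [h1] at hn₀ ⊢
        exact Stmt5.lemma_T0 hn₀
      · have hprev : (xi ω (Nat.find hex - 1)).Nonempty := by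
          rcases Set.eq_empty_or_nonempty (xi ω (Nat.find hex - 1)) with he | he
          · exact absurd he (Nat.find_min hex (by omega))
          · exact he
        have heq : Nat.find hex - 1 + 1 = Nat.find hex := by omega
        have := Stmt5.lemma_T (by omega : 1 ≤ Nat.find hex - 1) hprev (by rw [heq]; exact hn₀)
        rwa [heq] at this
    refine le_trans (sInf_le ⟨Nat.find hex, rfl, hQ⟩) ?_
    exact_mod_cast Nat.cast_le.mpr hn₀le
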